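/- arXiv:2311.03215 — 4 statements merged into one kernel-verified Lean document; each statement's English description precedes it below -/
import Mathlib

section
/- If B, A are matrices with the same number of columns and BᵀB is ε-spectrally close to AᵀA, i.e. (1−ε) BᵀB ⪯ AᵀA ⪯ (1+ε) BᵀB for 0 < ε < 1, then for every row a_i of A with a_i ⊥ ker(B), the generalized leverage score σ_i^B(A) := a_iᵀ (BᵀB)⁺ a_i satisfies (1−ε') σ_i(A) ≤ σ_i^B(A) ≤ (1+ε') σ_i(A) for ε' = ε/(1−ε), where σ_i(A) = a_iᵀ (AᵀA)⁺ a_i. -/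
open Matrix

/-- The four Penrose conditions characterizing the Moore–Penrose pseudoinverse. -/
def IsMoorePenrose {m n : Type*} [Fintype m] [Fintype n] (A : Matrix m n ℝ)
    (P : Matrix n m ℝ) : Prop :=
  A * P * A = A ∧ P * A * P = P ∧ (A * P)ᵀ = A * P ∧ (P * A)ᵀ = P * A

/-- The Gram matrix `CᵀC` is symmetric. -/
lemma gram_symm {k d : ℕ} (C : Matrix (Fin k) (Fin d) ℝ) : (Cᵀ * C)ᵀ = Cᵀ * C := by
  rw [transpose_mul, transpose_transpose]

/-- Quadratic form of the Gram matrix. -/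
lemma gram_quad {k d : ℕ} (C : Matrix (Fin k) (Fin d) ℝ) (v : Fin d → ℝ) :
    v ⬝ᵥ ((Cᵀ * C) *ᵥ v) = (C *ᵥ v) ⬝ᵥ (C *ᵥ v) := by
  rw [← mulVec_mulVec, dotProduct_mulVec, vecMul_transpose]

/-- If `a ⊥ ker C`, then `a` is fixed by the projection `(CᵀC)(CᵀC)⁺`. -/
lemma proj_fix {k d : ℕ} (C : Matrix (Fin k) (Fin d) ℝ) (P : Matrix (Fin d) (Fin d) ℝ)
    (hP : IsMoorePenrose (Cᵀ * C) P) (a : Fin d → ℝ)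
    (hker : ∀ v : Fin d → ℝ, C *ᵥ v = 0 → a ⬝ᵥ v = 0) :
    (Cᵀ * C) *ᵥ (P *ᵥ a) = a := by
  set N := Cᵀ * C with hN
  set r : Fin d → ℝ := a - N *ᵥ (P *ᵥ a) with hr
  have hsym : Nᵀ = N := gram_symm C
  have hNNP : N * N * P = N := by
    have h := congrArg transpose hP.1
    simp only [transpose_mul, hsym] at h
    calc N * N * P = N * (N * P) := by rw [Matrix.mul_assoc]
      _ = N * (N * P)ᵀ := by rw [hP.2.2.1]
      _ = N * (Pᵀ * Nᵀ) := by rw [transpose_mul]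
      _ = N * (Pᵀ * N) := by rw [hsym]
      _ = N := h
  have hNr : N *ᵥ r = 0 := by
    rw [hr, mulVec_sub, mulVec_mulVec, mulVec_mulVec, hNNP, sub_self]
  have hCr : C *ᵥ r = 0 := by
    have h := gram_quad C r
    rw [← hN, hNr, dotProduct_zero] at h
    exact dotProduct_self_eq_zero.mp h.symm
  have har : a ⬝ᵥ r = 0 := hker r hCr
  have hvm : r ᵥ* N = 0 := by
    rw [← hsym, vecMul_transpose, hNr]
  have hpr : (N *ᵥ (P *ᵥ a)) ⬝ᵥ r = 0 := by
    rw [dotProduct_comm, dotProduct_mulVec, hvm, zero_dotProduct]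
  have hrr : r ⬝ᵥ r = 0 := by
    rw [hr, sub_dotProduct, ← hr, har, hpr, sub_zero]
  have hr0 : r = 0 := dotProduct_self_eq_zero.mp hrr
  exact (sub_eq_zero.mp (hr ▸ hr0)).symm

lemma dp_self_nonneg {d : ℕ} (v : Fin d → ℝ) : 0 ≤ v ⬝ᵥ v :=
  Finset.sum_nonneg fun j _ => mul_self_nonneg _

/-- The variational characterization / optimality of `u = P *ᵥ a` for the
quadratic `v ↦ 2⟨a,v⟩ - ⟨v, CᵀC v⟩`. -/
lemma quad_bound {k d : ℕ} (C : Matrix (Fin k) (Fin d) ℝ) (P : Matrix (Fin d) (Fin d) ℝ)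
    (a : Fin d → ℝ) (hfix : (Cᵀ * C) *ᵥ (P *ᵥ a) = a) (v : Fin d → ℝ) :
    2 * (a ⬝ᵥ v) - v ⬝ᵥ ((Cᵀ * C) *ᵥ v) ≤ a ⬝ᵥ (P *ᵥ a) := by
  set N := Cᵀ * C with hN
  set u : Fin d → ℝ := P *ᵥ a with hu
  have hNsym : Nᵀ = N := gram_symm C
  have huNv : ∀ w : Fin d → ℝ, u ⬝ᵥ (N *ᵥ w) = a ⬝ᵥ w := by
    intro w
    rw [dotProduct_mulVec, ← mulVec_transpose, hNsym, hfix]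
  have key : 0 ≤ (v - u) ⬝ᵥ (N *ᵥ (v - u)) := by
    rw [gram_quad C]
    exact dp_self_nonneg _
  have expand : (v - u) ⬝ᵥ (N *ᵥ (v - u))
      = v ⬝ᵥ (N *ᵥ v) - 2 * (a ⬝ᵥ v) + a ⬝ᵥ u := by
    have h1 : v ⬝ᵥ (N *ᵥ u) = a ⬝ᵥ v := by
      rw [hu, hN, hfix, dotProduct_comm]
    have h2 : u ⬝ᵥ (N *ᵥ v) = a ⬝ᵥ v := huNv v
    have h3 : u ⬝ᵥ (N *ᵥ u) = a ⬝ᵥ u := huNv u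
    rw [mulVec_sub, sub_dotProduct, dotProduct_sub, dotProduct_sub, h1, h2, h3]
    ring
  have hau : a ⬝ᵥ u = a ⬝ᵥ (P *ᵥ a) := rfl
  rw [expand, hau] at key
  linarith

/-- If (1−ε)BᵀB ⪯ AᵀA ⪯ (1+ε)BᵀB, then for every row a_i of A orthogonal to ker(B),
the generalized leverage score σ_i^B(A) = a_iᵀ(BᵀB)⁺a_i is a (1±ε') multiplicative
approximation of σ_i(A) = a_iᵀ(AᵀA)⁺a_i, with ε' = ε/(1−ε). -/
theorem generalized_leverage_score_approx {n m d : ℕ}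
    (A : Matrix (Fin n) (Fin d) ℝ) (B : Matrix (Fin m) (Fin d) ℝ)
    (ε : ℝ) (hε0 : 0 < ε) (hε1 : ε < 1)
    (hlow : (Aᵀ * A - (1 - ε) • (Bᵀ * B)).PosSemidef)
    (hupp : ((1 + ε) • (Bᵀ * B) - Aᵀ * A).PosSemidef)
    (PB PA : Matrix (Fin d) (Fin d) ℝ)
    (hPB : IsMoorePenrose (Bᵀ * B) PB) (hPA : IsMoorePenrose (Aᵀ * A) PA)
    (i : Fin n) (hker : ∀ v : Fin d → ℝ, B *ᵥ v = 0 → A i ⬝ᵥ v = 0) :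
    (1 - ε / (1 - ε)) * (A i ⬝ᵥ (PA *ᵥ A i)) ≤ A i ⬝ᵥ (PB *ᵥ A i) ∧
    A i ⬝ᵥ (PB *ᵥ A i) ≤ (1 + ε / (1 - ε)) * (A i ⬝ᵥ (PA *ᵥ A i)) := by
  set a : Fin d → ℝ := A i with ha
  have hkerA : ∀ v : Fin d → ℝ, A *ᵥ v = 0 → a ⬝ᵥ v = 0 := by
    intro v hv
    have := congrFun hv i
    simpa [mulVec, ha] using this
  have hfixA : (Aᵀ * A) *ᵥ (PA *ᵥ a) = a := proj_fix A PA hPA a hkerA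
  have hfixB : (Bᵀ * B) *ᵥ (PB *ᵥ a) = a := proj_fix B PB hPB a hker
  set s : ℝ := a ⬝ᵥ (PA *ᵥ a) with hs
  set t : ℝ := a ⬝ᵥ (PB *ᵥ a) with ht
  have h1ε : (0:ℝ) < 1 - ε := by linarith
  -- quadratic forms of the special vectors
  set vA : Fin d → ℝ := PA *ᵥ a with hvA
  set vB : Fin d → ℝ := PB *ᵥ a with hvB
  have hAMA : vA ⬝ᵥ ((Aᵀ * A) *ᵥ vA) = s := by
    rw [hvA, hfixA, dotProduct_comm]
  have hBNB : vB ⬝ᵥ ((Bᵀ * B) *ᵥ vB) = t := by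
    rw [hvB, hfixB, dotProduct_comm]
  have haA : a ⬝ᵥ vA = s := rfl
  have haB : a ⬝ᵥ vB = t := rfl
  -- spectral bounds at vA and vB
  have hlowA : (1 - ε) * (vA ⬝ᵥ ((Bᵀ * B) *ᵥ vA)) ≤ vA ⬝ᵥ ((Aᵀ * A) *ᵥ vA) := by
    have h := hlow.dotProduct_mulVec_nonneg vA
    simp only [star_trivial, sub_mulVec, smul_mulVec, dotProduct_sub,
      dotProduct_smul, smul_eq_mul] at h
    linarith
  have huppB : vB ⬝ᵥ ((Aᵀ * A) *ᵥ vB) ≤ (1 + ε) * (vB ⬝ᵥ ((Bᵀ * B) *ᵥ vB)) := by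
    have h := hupp.dotProduct_mulVec_nonneg vB
    simp only [star_trivial, sub_mulVec, smul_mulVec, dotProduct_sub,
      dotProduct_smul, smul_eq_mul] at h
    linarith
  have hBnn : 0 ≤ vA ⬝ᵥ ((Bᵀ * B) *ᵥ vA) := by
    rw [gram_quad]; exact dp_self_nonneg _
  -- lower bound
  have hlower : 2 * s - vA ⬝ᵥ ((Bᵀ * B) *ᵥ vA) ≤ t := by
    have := quad_bound B PB a hfixB vA
    rw [haA] at this
    exact this
  have hNA_le : vA ⬝ᵥ ((Bᵀ * B) *ᵥ vA) ≤ s / (1 - ε) := by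
    rw [hAMA] at hlowA
    rw [le_div_iff₀ h1ε]
    linarith
  have lower : (1 - ε / (1 - ε)) * s ≤ t := by
    have h : 2 * s - s / (1 - ε) ≤ t := by linarith
    have heq : (1 - ε / (1 - ε)) * s = 2 * s - s / (1 - ε) := by
      field_simp
      ring
    linarith [heq ▸ h]
  -- upper bound
  have hupper : 2 * t - vB ⬝ᵥ ((Aᵀ * A) *ᵥ vB) ≤ s := by
    have := quad_bound A PA a hfixA vB
    rw [haB] at this
    exact this
  have hst : (1 - ε) * t ≤ s := by
    rw [hBNB] at huppB
    linarith
  have upper : t ≤ (1 + ε / (1 - ε)) * s := by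
    have heq : (1 + ε / (1 - ε)) * s = s / (1 - ε) := by
      field_simp
      ring
    rw [heq, le_div_iff₀ h1ε]
    linarith
  exact ⟨lower, upper⟩
end

section
/- Let B ∈ ℝ^{n×d}, let D ∈ ℝ^{n×n} be diagonal with every diagonal entry D_{ii} ∈ [1−ε, 1+ε], and let v ∈ ℝ^n. Then ‖Bᵀv − BᵀDv‖_{(BᵀB)^{-1}} ≤ ε ‖v‖₂, where ‖u‖_M := √(uᵀMu) and BᵀB is assumed invertible. -/
open Matrix

lemma proj_dot_le {n d : ℕ} (B : Matrix (Fin n) (Fin d) ℝ)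
    (hB : (Bᵀ * B).PosDef) (u : Fin n → ℝ) :
    (Bᵀ *ᵥ u) ⬝ᵥ ((Bᵀ * B)⁻¹ *ᵥ (Bᵀ *ᵥ u)) ≤ u ⬝ᵥ u := by
  set M : Matrix (Fin d) (Fin d) ℝ := (Bᵀ * B)⁻¹ with hM
  have hdet : IsUnit (Bᵀ * B).det := hB.det_pos.ne'.isUnit
  have hMsymm : Mᵀ = M := by
    rw [hM, Matrix.transpose_nonsing_inv, Matrix.transpose_mul,
      Matrix.transpose_transpose]
  have hBM : (Bᵀ * B) * M = 1 := Matrix.mul_nonsing_inv _ hdet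
  set P : Matrix (Fin n) (Fin n) ℝ := B * M * Bᵀ with hP
  have hPsymm : Pᵀ = P := by
    rw [hP, Matrix.transpose_mul, Matrix.transpose_mul, hMsymm,
      Matrix.transpose_transpose, Matrix.mul_assoc]
  have hPP : P * P = P := by
    rw [hP]
    calc B * M * Bᵀ * (B * M * Bᵀ) = B * (M * ((Bᵀ * B) * M)) * Bᵀ := by
          simp only [Matrix.mul_assoc]
      _ = B * M * Bᵀ := by rw [hBM, Matrix.mul_one, Matrix.mul_assoc]
  have key : (Bᵀ *ᵥ u) ⬝ᵥ (M *ᵥ (Bᵀ *ᵥ u)) = u ⬝ᵥ (P *ᵥ u) := by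
    rw [Matrix.mulVec_mulVec, Matrix.mulVec_transpose,
      ← Matrix.dotProduct_mulVec, Matrix.mulVec_mulVec, ← Matrix.mul_assoc]
  rw [key]
  have hsq : 0 ≤ (u - P *ᵥ u) ⬝ᵥ (u - P *ᵥ u) := by
    apply Finset.sum_nonneg
    intro i _
    exact mul_self_nonneg _
  have hPuPu : (P *ᵥ u) ⬝ᵥ (P *ᵥ u) = u ⬝ᵥ (P *ᵥ u) := by
    calc (P *ᵥ u) ⬝ᵥ (P *ᵥ u) = ((P *ᵥ u) ᵥ* P) ⬝ᵥ u := by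
          rw [Matrix.dotProduct_mulVec]
      _ = (Pᵀ *ᵥ (P *ᵥ u)) ⬝ᵥ u := by rw [Matrix.mulVec_transpose]
      _ = ((Pᵀ * P) *ᵥ u) ⬝ᵥ u := by rw [Matrix.mulVec_mulVec]
      _ = (P *ᵥ u) ⬝ᵥ u := by rw [hPsymm, hPP]
      _ = u ⬝ᵥ (P *ᵥ u) := dotProduct_comm _ _
  have hPuu : (P *ᵥ u) ⬝ᵥ u = u ⬝ᵥ (P *ᵥ u) := dotProduct_comm _ _
  have expand : (u - P *ᵥ u) ⬝ᵥ (u - P *ᵥ u)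
      = u ⬝ᵥ u - u ⬝ᵥ (P *ᵥ u) := by
    rw [sub_dotProduct, dotProduct_sub, dotProduct_sub,
      hPuPu, hPuu]
    ring
  linarith [hsq, expand.symm ▸ hsq]

/-- If D = diag(w) with w_i ∈ [1−ε, 1+ε] and BᵀB is positive definite, then
‖Bᵀv − BᵀDv‖_{(BᵀB)⁻¹} ≤ ε ‖v‖₂. -/
theorem multiplicative_reweighting_error {n d : ℕ}
    (B : Matrix (Fin n) (Fin d) ℝ) (w : Fin n → ℝ) (v : Fin n → ℝ)
    (ε : ℝ) (hε : 0 ≤ ε)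
    (hw : ∀ i, w i ∈ Set.Icc (1 - ε) (1 + ε))
    (hB : (Bᵀ * B).PosDef) :
    Real.sqrt ((Bᵀ *ᵥ v - Bᵀ *ᵥ (Matrix.diagonal w *ᵥ v)) ⬝ᵥ
        ((Bᵀ * B)⁻¹ *ᵥ (Bᵀ *ᵥ v - Bᵀ *ᵥ (Matrix.diagonal w *ᵥ v)))) ≤
      ε * Real.sqrt (v ⬝ᵥ v) := by
  set u : Fin n → ℝ := v - Matrix.diagonal w *ᵥ v with hu
  have hBu : Bᵀ *ᵥ v - Bᵀ *ᵥ (Matrix.diagonal w *ᵥ v) = Bᵀ *ᵥ u := by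
    rw [hu, Matrix.mulVec_sub]
  rw [hBu]
  have h1 : (Bᵀ *ᵥ u) ⬝ᵥ ((Bᵀ * B)⁻¹ *ᵥ (Bᵀ *ᵥ u)) ≤ u ⬝ᵥ u :=
    proj_dot_le B hB u
  have h2 : u ⬝ᵥ u ≤ ε ^ 2 * (v ⬝ᵥ v) := by
    rw [dotProduct, dotProduct, Finset.mul_sum]
    apply Finset.sum_le_sum
    intro i _
    have hui : u i = (1 - w i) * v i := by
      simp [hu, Matrix.mulVec_diagonal]
      ring
    rw [hui]
    have habs : (1 - w i) ^ 2 ≤ ε ^ 2 := by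
      obtain ⟨h3, h4⟩ := hw i
      nlinarith
    calc (1 - w i) * v i * ((1 - w i) * v i) = (1 - w i) ^ 2 * (v i * v i) := by
          ring
      _ ≤ ε ^ 2 * (v i * v i) :=
          mul_le_mul_of_nonneg_right habs (mul_self_nonneg _)
  calc Real.sqrt ((Bᵀ *ᵥ u) ⬝ᵥ ((Bᵀ * B)⁻¹ *ᵥ (Bᵀ *ᵥ u)))
      ≤ Real.sqrt (ε ^ 2 * (v ⬝ᵥ v)) := Real.sqrt_le_sqrt (h1.trans h2)
    _ = ε * Real.sqrt (v ⬝ᵥ v) := by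
        rw [Real.sqrt_mul (sq_nonneg ε), Real.sqrt_sq hε]
end

section
/- Covariance trace bound for the matrix-vector sampling estimator: let B ∈ ℝ^{n×d}, v ∈ ℝ^n, and let W̃ be positive definite with W̃ ⪯ BᵀB ⪯ (1+γ)·W̃ for γ ≥ 0. Define the random vector X = −n v_ℓ W̃^{-1/2} Bᵀ e_ℓ with ℓ uniform on [n]. Then E[X] = −W̃^{-1/2} Bᵀ v, and each coordinate variance satisfies E[X_i²] ≤ (1+γ) n ‖v‖_∞², hence Tr(Cov(X)) ≤ (1+γ) n d ‖v‖_∞². -/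
open Matrix
open scoped MatrixOrder

/-- Covariance trace bound for the matrix-vector sampling estimator:
with X(ℓ) = −n v_ℓ W̃^{-1/2} Bᵀ e_ℓ and ℓ uniform on [n], the mean is
−W̃^{-1/2} Bᵀ v, each coordinate second moment is at most (1+γ) n ‖v‖_∞², and
the trace of the covariance matrix is at most (1+γ) n d ‖v‖_∞². -/
theorem sampling_estimator_mean_and_cov_trace {n d : ℕ} (hn : 0 < n)
    (B : Matrix (Fin n) (Fin d) ℝ) (v : Fin n → ℝ)
    (Wt : Matrix (Fin d) (Fin d) ℝ) (γ α : ℝ) (hγ : 0 ≤ γ)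
    (hWt : Wt.PosDef)
    (h1 : (Bᵀ * B - Wt).PosSemidef) (h2 : ((1 + γ) • Wt - Bᵀ * B).PosSemidef)
    (hα : ∀ ℓ, |v ℓ| ≤ α)
    (X : Fin n → Fin d → ℝ)
    (hX : ∀ ℓ, X ℓ =
      (-(n : ℝ) * v ℓ) • ((CFC.sqrt Wt)⁻¹ *ᵥ (Bᵀ *ᵥ Pi.single ℓ 1))) :
    ((n : ℝ)⁻¹ • ∑ ℓ, X ℓ) = -((CFC.sqrt Wt)⁻¹ *ᵥ (Bᵀ *ᵥ v)) ∧
    (∀ i, (n : ℝ)⁻¹ * ∑ ℓ, (X ℓ i) ^ 2 ≤ (1 + γ) * n * α ^ 2) ∧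
    (∑ i : Fin d, ((n : ℝ)⁻¹ * ∑ ℓ, (X ℓ i) ^ 2 - ((n : ℝ)⁻¹ * ∑ ℓ, X ℓ i) ^ 2))
      ≤ (1 + γ) * n * d * α ^ 2 := by
  have hn' : (n : ℝ) ≠ 0 := Nat.cast_ne_zero.mpr hn.ne'
  set S := CFC.sqrt Wt with hSdef
  set M : Matrix (Fin d) (Fin d) ℝ := S⁻¹ with hMdef
  have hSherm : Sᵀ = S := by
    have := (nonneg_iff_posSemidef.mp (CFC.sqrt_nonneg Wt)).1
    simpa [Matrix.IsHermitian, Matrix.conjTranspose_eq_transpose_of_trivial] using this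
  have hSS : S * S = Wt := CFC.sqrt_mul_sqrt_self Wt hWt.posSemidef.nonneg
  have hdetS : IsUnit S.det := by
    have hdet : S.det * S.det = Wt.det := by rw [← Matrix.det_mul, hSS]
    have : Wt.det ≠ 0 := ne_of_gt hWt.det_pos
    exact isUnit_iff_ne_zero.mpr (fun h => this (by rw [← hdet, h, mul_zero]))
  have hMS : M * S = 1 := Matrix.nonsing_inv_mul S hdetS
  have hSM : S * M = 1 := Matrix.mul_nonsing_inv S hdetS
  have hMherm : Mᵀ = M := by rw [hMdef, Matrix.transpose_nonsing_inv, hSherm]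
  set A : Matrix (Fin d) (Fin n) ℝ := M * Bᵀ with hAdef
  have hXA : ∀ ℓ i, X ℓ i = (-(n : ℝ) * v ℓ) * A i ℓ := by
    intro ℓ i
    rw [hX ℓ]
    simp only [Pi.smul_apply, smul_eq_mul, Matrix.mulVec_mulVec]
    simp [hAdef]
  -- diagonal bound
  have hMWtM : M * Wt * M = 1 := by
    rw [← hSS, ← Matrix.mul_assoc, hMS, Matrix.one_mul, hSM]
  have hC : (M * ((1 + γ) • Wt - Bᵀ * B) * M).PosSemidef := by
    have := h2.conjTranspose_mul_mul_same M
    simpa [Matrix.conjTranspose_eq_transpose_of_trivial, hMherm] using this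
  have hdiag : ∀ i, ∑ ℓ, (A i ℓ) ^ 2 ≤ 1 + γ := by
    intro i
    have h0 : 0 ≤ (M * ((1 + γ) • Wt - Bᵀ * B) * M) i i := by
      have := hC.dotProduct_mulVec_nonneg (Pi.single i 1)
      simpa [dotProduct, Matrix.mulVec_single, Pi.single_apply,
        Finset.sum_ite_eq'] using this
    have hexp : (M * ((1 + γ) • Wt - Bᵀ * B) * M) i i
        = (1 + γ) - ∑ ℓ, (A i ℓ) ^ 2 := by
      have e1 : M * ((1 + γ) • Wt - Bᵀ * B) * M
          = (1 + γ) • (M * Wt * M) - A * Aᵀ := by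
        rw [hAdef, Matrix.transpose_mul, hMherm, Matrix.transpose_transpose]
        simp only [Matrix.mul_sub, Matrix.sub_mul, Matrix.mul_smul, Matrix.smul_mul,
          Matrix.mul_assoc]
      rw [e1, hMWtM]
      simp [Matrix.sub_apply, Matrix.smul_apply, Matrix.one_apply, Matrix.mul_apply, sq]
    linarith [hexp ▸ h0]
  have hsecond : ∀ i, (n : ℝ)⁻¹ * ∑ ℓ, (X ℓ i) ^ 2 ≤ (1 + γ) * n * α ^ 2 := by
    intro i
    have hα0 : 0 ≤ α := le_trans (abs_nonneg _) (hα ⟨0, hn⟩)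
    have key : ∑ ℓ, (X ℓ i) ^ 2 ≤ ∑ ℓ, (n : ℝ) ^ 2 * α ^ 2 * (A i ℓ) ^ 2 := by
      apply Finset.sum_le_sum
      intro ℓ _
      rw [hXA]
      have hv2 : (v ℓ) ^ 2 ≤ α ^ 2 := by
        have := hα ℓ
        nlinarith [abs_nonneg (v ℓ), sq_abs (v ℓ)]
      have h := mul_le_mul_of_nonneg_right hv2 (sq_nonneg (A i ℓ))
      nlinarith [mul_le_mul_of_nonneg_left h (sq_nonneg (n : ℝ))]
    have h2' : ∑ ℓ, (n : ℝ) ^ 2 * α ^ 2 * (A i ℓ) ^ 2 ≤ (n : ℝ) ^ 2 * α ^ 2 * (1 + γ) := by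
      rw [← Finset.mul_sum]
      exact mul_le_mul_of_nonneg_left (hdiag i) (by positivity)
    calc (n : ℝ)⁻¹ * ∑ ℓ, (X ℓ i) ^ 2
        ≤ (n : ℝ)⁻¹ * ((n : ℝ) ^ 2 * α ^ 2 * (1 + γ)) := by
          apply mul_le_mul_of_nonneg_left (le_trans key h2') (by positivity)
      _ = (1 + γ) * n * α ^ 2 := by field_simp
  refine ⟨?_, hsecond, ?_⟩
  · funext i
    have : ((n : ℝ)⁻¹ • ∑ ℓ, X ℓ) i = ∑ ℓ, (-(v ℓ)) * A i ℓ := by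
      simp only [Pi.smul_apply, Finset.sum_apply, smul_eq_mul, Finset.mul_sum]
      apply Finset.sum_congr rfl
      intro ℓ _
      rw [hXA]
      field_simp
    rw [this]
    simp [Matrix.mulVec_mulVec, hAdef, Matrix.mulVec, dotProduct, Finset.mul_sum]
    apply Finset.sum_congr rfl
    intro ℓ _
    ring
  · calc (∑ i : Fin d, ((n : ℝ)⁻¹ * ∑ ℓ, (X ℓ i) ^ 2 - ((n : ℝ)⁻¹ * ∑ ℓ, X ℓ i) ^ 2))
        ≤ ∑ i : Fin d, (1 + γ) * n * α ^ 2 := by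
          apply Finset.sum_le_sum
          intro i _
          have := hsecond i
          nlinarith [sq_nonneg ((n : ℝ)⁻¹ * ∑ ℓ, X ℓ i)]
      _ = (1 + γ) * n * d * α ^ 2 := by
          rw [Finset.sum_const, Finset.card_univ, Fintype.card_fin]
          push_cast; ring
end

section
/- Suboptimality along the central path: let f be a self-concordant barrier for convex domain D with complexity ϑ_f = sup_x ‖H(x)^{-1}g(x)‖²_{H(x)}, let f_η(x) = η cᵀx + f(x) and let z(η) minimize f_η. Then for any y ∈ D with ‖y − z(η)‖_{z(η)} < 1, we have cᵀy ≤ min_{x∈D} cᵀx + (ϑ_f/η)(1 + ‖y − z(η)‖_{z(η)}); in particular cᵀy ≤ val + 2ϑ_f/η when ‖y−z(η)‖_{z(η)} ≤ 1. -/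
open Matrix

/-- The local norm ‖v‖_H = √(vᵀ H v). -/
noncomputable def localNorm {d : ℕ} (H : Matrix (Fin d) (Fin d) ℝ)
    (v : Fin d → ℝ) : ℝ :=
  Real.sqrt (v ⬝ᵥ (H *ᵥ v))

/-- (Strongly nondegenerate) self-concordance of a function with Hessian field H on
the domain D (Renegar's definition): for every x ∈ D, the open unit ball in the
local norm at x is contained in D, and for every y in that ball and every v ≠ 0,
1 − ‖y−x‖_x ≤ ‖v‖_y/‖v‖_x ≤ 1/(1 − ‖y−x‖_x). -/
def SelfConcordantOn {d : ℕ} (D : Set (Fin d → ℝ))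
    (H : (Fin d → ℝ) → Matrix (Fin d) (Fin d) ℝ) : Prop :=
  ∀ x ∈ D,
    (∀ y, localNorm (H x) (y - x) < 1 → y ∈ D) ∧
    ∀ y, localNorm (H x) (y - x) < 1 → ∀ v : Fin d → ℝ, v ≠ 0 →
      (1 - localNorm (H x) (y - x)) * localNorm (H x) v ≤ localNorm (H y) v ∧
      (1 - localNorm (H x) (y - x)) * localNorm (H y) v ≤ localNorm (H x) v

/-- g is the gradient of f and H the Hessian (derivative of g) at every point of D. -/
def IsGradHessOn {d : ℕ} (D : Set (Fin d → ℝ)) (f : (Fin d → ℝ) → ℝ)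
    (g : (Fin d → ℝ) → (Fin d → ℝ))
    (H : (Fin d → ℝ) → Matrix (Fin d) (Fin d) ℝ) : Prop :=
  ∀ x ∈ D,
    (∃ L : (Fin d → ℝ) →L[ℝ] ℝ, HasFDerivAt f L x ∧ ∀ v, L v = g x ⬝ᵥ v) ∧
    (∃ L' : (Fin d → ℝ) →L[ℝ] (Fin d → ℝ), HasFDerivAt g L' x ∧ ∀ v, L' v = H x *ᵥ v)

open Set

variable {d : ℕ}

lemma quad_nonneg {M : Matrix (Fin d) (Fin d) ℝ} (hM : M.PosSemidef) (x : Fin d → ℝ) :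
    0 ≤ x ⬝ᵥ M *ᵥ x := by simpa using hM.dotProduct_mulVec_nonneg x

lemma symm_dot {M : Matrix (Fin d) (Fin d) ℝ} (hM : M.IsHermitian) (u v : Fin d → ℝ) :
    u ⬝ᵥ M *ᵥ v = v ⬝ᵥ M *ᵥ u := by
  have ht : Mᵀ = M := by
    have := hM.eq
    rw [Matrix.conjTranspose_eq_transpose_of_trivial] at this
    exact this
  rw [dotProduct_mulVec, ← Matrix.mulVec_transpose, ht, dotProduct_comm]

lemma cs_psd {M : Matrix (Fin d) (Fin d) ℝ} (hM : M.PosSemidef) (u w : Fin d → ℝ) :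
    (w ⬝ᵥ M *ᵥ u) ^ 2 ≤ (w ⬝ᵥ M *ᵥ w) * (u ⬝ᵥ M *ᵥ u) := by
  have key : ∀ t : ℝ, 0 ≤ (w ⬝ᵥ M *ᵥ w) * (t * t) + (2 * (w ⬝ᵥ M *ᵥ u)) * t + u ⬝ᵥ M *ᵥ u := by
    intro t
    have h := quad_nonneg hM (u + t • w)
    have hsym := symm_dot hM.1 u w
    simp only [Matrix.mulVec_add, Matrix.mulVec_smul, dotProduct_add, add_dotProduct,
      dotProduct_smul, smul_dotProduct, smul_eq_mul] at h
    rw [hsym] at h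
    nlinarith [h]
  have h2 := discrim_le_zero key
  rw [discrim] at h2
  nlinarith [h2]

lemma grad_bound {D : Set (Fin d → ℝ)} (hDc : Convex ℝ D)
    {g : (Fin d → ℝ) → (Fin d → ℝ)} {H : (Fin d → ℝ) → Matrix (Fin d) (Fin d) ℝ}
    (hgh' : ∀ x ∈ D, ∃ L' : (Fin d → ℝ) →L[ℝ] (Fin d → ℝ),
      HasFDerivAt g L' x ∧ ∀ v, L' v = H x *ᵥ v)
    (hpos : ∀ x ∈ D, (H x).PosDef)
    {ϑ : ℝ} (hϑ : ∀ x ∈ D, g x ⬝ᵥ ((H x)⁻¹ *ᵥ g x) ≤ ϑ)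
    {z : Fin d → ℝ} (hz : z ∈ D) {x : Fin d → ℝ} (hx : x ∈ D) :
    g z ⬝ᵥ (x - z) ≤ ϑ := by
  set u : Fin d → ℝ := x - z with hu
  set γ : ℝ → (Fin d → ℝ) := fun t => z + t • u with hγ
  have hγmem : ∀ t ∈ Icc (0:ℝ) 1, γ t ∈ D := fun t ht => hDc.add_smul_sub_mem hz hx ht
  set ψ : ℝ → ℝ := fun t => g (γ t) ⬝ᵥ u with hψ
  -- derivative of ψ
  have hderiv : ∀ t ∈ Icc (0:ℝ) 1, HasDerivAt ψ (u ⬝ᵥ (H (γ t) *ᵥ u)) t := by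
    intro t ht
    obtain ⟨L', hL', hLv⟩ := hgh' (γ t) (hγmem t ht)
    have hγ' : HasDerivAt γ u t := by
      have h1 : HasDerivAt (fun s : ℝ => s • u) ((1:ℝ) • u) t := (hasDerivAt_id t).smul_const u
      simpa [hγ] using h1.const_add z
    have hcomp : HasDerivAt (fun s => g (γ s)) (L' u) t := hL'.comp_hasDerivAt t hγ'
    have hsum : HasDerivAt (fun s => ∑ i, g (γ s) i * u i) (∑ i, (H (γ t) *ᵥ u) i * u i) t := by
      apply HasDerivAt.fun_sum
      intro i _
      have := (hasDerivAt_pi.mp hcomp) i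
      have h2 := this.mul_const (u i)
      simpa [hLv] using h2
    have heq : ψ = fun s => ∑ i, g (γ s) i * u i := by
      funext s; simp [hψ, dotProduct]
    rw [heq]
    convert hsum using 1
    simp only [dotProduct]
    exact Finset.sum_congr rfl fun i _ => mul_comm _ _
  have hpsd : ∀ t ∈ Icc (0:ℝ) 1, 0 ≤ u ⬝ᵥ (H (γ t) *ᵥ u) :=
    fun t ht => quad_nonneg (hpos _ (hγmem t ht)).posSemidef u
  -- monotone
  have hcont : ContinuousOn ψ (Icc 0 1) :=
    fun t ht => ((hderiv t ht).continuousAt).continuousWithinAt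
  have hdiff : DifferentiableOn ℝ ψ (interior (Icc (0:ℝ) 1)) := by
    intro t ht
    exact ((hderiv t (interior_subset ht)).differentiableAt).differentiableWithinAt
  have hmono : MonotoneOn ψ (Icc 0 1) := by
    apply monotoneOn_of_deriv_nonneg (convex_Icc 0 1) hcont hdiff
    intro t ht
    rw [(hderiv t (interior_subset ht)).deriv]
    exact hpsd t (interior_subset ht)
  -- Cauchy-Schwarz bound
  have hCS : ∀ t ∈ Icc (0:ℝ) 1, (ψ t) ^ 2 ≤ ϑ * (u ⬝ᵥ (H (γ t) *ᵥ u)) := by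
    intro t ht
    set M := H (γ t) with hM
    have hMpd := hpos _ (hγmem t ht)
    set w : Fin d → ℝ := M⁻¹ *ᵥ g (γ t) with hw
    have hdet : IsUnit M.det := isUnit_iff_ne_zero.mpr hMpd.det_pos.ne'
    have hMw : M *ᵥ w = g (γ t) := by
      rw [hw, Matrix.mulVec_mulVec, Matrix.mul_nonsing_inv _ hdet, Matrix.one_mulVec]
    have hψt : ψ t = w ⬝ᵥ M *ᵥ u := by
      have h1 : ψ t = g (γ t) ⬝ᵥ u := rfl
      rw [h1, ← hMw, dotProduct_comm, symm_dot hMpd.1 u w]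
    have hcs := cs_psd hMpd.posSemidef u w
    have hwMw : w ⬝ᵥ M *ᵥ w ≤ ϑ := by
      rw [show M *ᵥ w = g (γ t) from hMw, dotProduct_comm]
      exact hϑ _ (hγmem t ht)
    have huMu := hpsd t ht
    calc (ψ t) ^ 2 = (w ⬝ᵥ M *ᵥ u) ^ 2 := by rw [hψt]
      _ ≤ (w ⬝ᵥ M *ᵥ w) * (u ⬝ᵥ M *ᵥ u) := hcs
      _ ≤ ϑ * (u ⬝ᵥ M *ᵥ u) := mul_le_mul_of_nonneg_right hwMw huMu
  have hϑnn : 0 ≤ ϑ :=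
    le_trans (quad_nonneg (hpos z hz).inv.posSemidef (g z)) (hϑ z hz)
  -- contradiction
  by_contra hcon
  push_neg at hcon
  have hψ0 : ψ 0 = g z ⬝ᵥ u := by simp [hψ, hγ]
  have h0 : (0:ℝ) ∈ Icc (0:ℝ) 1 := by constructor <;> norm_num
  have h1 : (1:ℝ) ∈ Icc (0:ℝ) 1 := by constructor <;> norm_num
  have hgt : ϑ < ψ 0 := by rw [hψ0]; exact hcon
  have hψpos : ∀ t ∈ Icc (0:ℝ) 1, ϑ < ψ t := fun t ht =>
    lt_of_lt_of_le hgt (hmono h0 ht ht.1)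
  rcases eq_or_lt_of_le hϑnn with hϑ0 | hϑpos
  · -- ϑ = 0
    have h := hCS 0 h0
    rw [← hϑ0] at h
    have := hψpos 0 h0
    rw [← hϑ0] at this
    nlinarith
  · -- ϑ > 0
    set φ : ℝ → ℝ := fun t => (ψ t)⁻¹ + t / ϑ with hφ
    have hψposval : ∀ t ∈ Icc (0:ℝ) 1, 0 < ψ t := fun t ht => lt_trans hϑpos (hψpos t ht)
    have hφderiv : ∀ t ∈ Icc (0:ℝ) 1,
        HasDerivAt φ (-(u ⬝ᵥ (H (γ t) *ᵥ u)) / (ψ t) ^ 2 + 1 / ϑ) t := by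
      intro t ht
      exact ((hderiv t ht).inv (hψposval t ht).ne').add ((hasDerivAt_id t).div_const ϑ)
    have hφanti : AntitoneOn φ (Icc 0 1) := by
      apply antitoneOn_of_deriv_nonpos (convex_Icc 0 1)
      · exact fun t ht => ((hφderiv t ht).continuousAt).continuousWithinAt
      · exact fun t ht => ((hφderiv t (interior_subset ht)).differentiableAt).differentiableWithinAt
      · intro t ht
        have ht' := interior_subset ht
        rw [(hφderiv t ht').deriv]
        have hcs := hCS t ht'
        have hp := hψposval t ht'
        have hq : (0:ℝ) < (ψ t) ^ 2 := pow_pos hp 2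
        have h1ϑ : 1 / ϑ ≤ (u ⬝ᵥ (H (γ t) *ᵥ u)) / (ψ t) ^ 2 := by
          rw [div_le_div_iff₀ hϑpos hq]
          nlinarith [hcs]
        have : -(u ⬝ᵥ (H (γ t) *ᵥ u)) / (ψ t) ^ 2 = -((u ⬝ᵥ (H (γ t) *ᵥ u)) / (ψ t) ^ 2) :=
          neg_div _ _
        rw [this]
        linarith
    have h10 : φ 1 ≤ φ 0 := hφanti h0 h1 zero_le_one
    have hφ0 : φ 0 = (ψ 0)⁻¹ := by simp [hφ]
    have hφ1 : φ 1 = (ψ 1)⁻¹ + 1 / ϑ := by simp [hφ]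
    have hinv0 : (ψ 0)⁻¹ < ϑ⁻¹ := by
      apply inv_strictAnti₀ hϑpos hgt
    have hinv1 : 0 < (ψ 1)⁻¹ := inv_pos.mpr (hψposval 1 h1)
    rw [hφ0, hφ1] at h10
    rw [one_div] at h10
    linarith

set_option maxHeartbeats 1600000 in
/-- Suboptimality along the central path: if f is a self-concordant barrier for D with
complexity bound ϑ, z minimizes f_η(x) = η cᵀx + f(x), and y ∈ D satisfies
‖y − z‖_z ≤ 1, then cᵀy ≤ cᵀx + (ϑ/η)(1 + ‖y − z‖_z) for every x ∈ D
(hence cᵀy ≤ val + 2ϑ/η). -/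
theorem central_path_suboptimality {d : ℕ}
    {D : Set (Fin d → ℝ)} (hDo : IsOpen D) (hDc : Convex ℝ D)
    (hDb : Bornology.IsBounded D)
    (f : (Fin d → ℝ) → ℝ) (g : (Fin d → ℝ) → (Fin d → ℝ))
    (H : (Fin d → ℝ) → Matrix (Fin d) (Fin d) ℝ)
    (hgh : IsGradHessOn D f g H) (hpos : ∀ x ∈ D, (H x).PosDef)
    (hsc : SelfConcordantOn D H)
    (ϑ : ℝ) (hϑ : ∀ x ∈ D, g x ⬝ᵥ ((H x)⁻¹ *ᵥ g x) ≤ ϑ)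
    (c : Fin d → ℝ) (η : ℝ) (hη : 0 < η)
    (z : Fin d → ℝ) (hz : z ∈ D)
    (hzmin : ∀ x ∈ D, η * (c ⬝ᵥ z) + f z ≤ η * (c ⬝ᵥ x) + f x)
    (y : Fin d → ℝ) (hy : y ∈ D) (hyz : localNorm (H z) (y - z) ≤ 1) :
    ∀ x ∈ D, c ⬝ᵥ y ≤ c ⬝ᵥ x + (ϑ / η) * (1 + localNorm (H z) (y - z)) := by
  classical
  -- first-order optimality: η c + g z = 0
  obtain ⟨⟨L, hL, hLv⟩, -⟩ := hgh z hz
  set T : (Fin d → ℝ) →L[ℝ] ℝ := ∑ i, (η * c i) • ContinuousLinearMap.proj i with hT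
  have hTv : ∀ v, T v = η * (c ⬝ᵥ v) := by
    intro v
    simp [hT, ContinuousLinearMap.sum_apply, ContinuousLinearMap.smul_apply,
      ContinuousLinearMap.proj_apply, dotProduct, Finset.mul_sum, mul_assoc]
  have hTF : HasFDerivAt (fun x => η * (c ⬝ᵥ x)) T z := by
    have heq : (fun x => η * (c ⬝ᵥ x)) = fun x => T x := funext fun v => (hTv v).symm
    rw [heq]; exact T.hasFDerivAt
  have hF : HasFDerivAt (fun x => η * (c ⬝ᵥ x) + f x) (T + L) z := hTF.add hL
  have hlocmin : IsLocalMin (fun x => η * (c ⬝ᵥ x) + f x) z := by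
    filter_upwards [hDo.mem_nhds hz] with w hw using hzmin w hw
  have hzero : T + L = 0 := hlocmin.hasFDerivAt_eq_zero hF
  have hfoc : ∀ v, η * (c ⬝ᵥ v) + g z ⬝ᵥ v = 0 := by
    intro v
    have h := ContinuousLinearMap.ext_iff.mp hzero v
    simpa [ContinuousLinearMap.add_apply, hTv, hLv] using h
  set r := localNorm (H z) (y - z) with hr
  have hrnn : 0 ≤ r := Real.sqrt_nonneg _
  have hzy : localNorm (H z) (z - y) = r := by
    have hneg : z - y = -(y - z) := (neg_sub y z).symm
    rw [hr]
    unfold localNorm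
    rw [hneg, Matrix.mulVec_neg, dotProduct_neg, neg_dotProduct, neg_neg]
  have hϑnn : 0 ≤ ϑ := le_trans (quad_nonneg (hpos z hz).inv.posSemidef (g z)) (hϑ z hz)
  -- second key bound
  have key2 : g z ⬝ᵥ (z - y) ≤ ϑ * r := by
    rcases eq_or_lt_of_le hrnn with hr0 | hrpos
    · have hyz0 : y - z = 0 := by
        by_contra hne
        have hq : 0 < (y - z) ⬝ᵥ (H z *ᵥ (y - z)) := by simpa using (hpos z hz).dotProduct_mulVec_pos hne
        have hrp : 0 < r := by rw [hr]; exact Real.sqrt_pos.mpr hq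
        linarith
      have hzy0 : z - y = 0 := by rw [← neg_sub, hyz0, neg_zero]
      rw [hzy0, dotProduct_zero, ← hr0, mul_zero]
    · apply le_of_forall_pos_le_add
      intro ε hε
      set δ := ε / (ϑ + 1) with hδ
      have hδpos : 0 < δ := div_pos hε (by linarith)
      set t := 1 / (r + δ) with ht
      have htpos : 0 < t := by rw [ht]; positivity
      set w := z + t • (z - y) with hw
      have hwz : w - z = t • (z - y) := by rw [hw]; abel
      have hwnorm : localNorm (H z) (w - z) = t * r := by
        rw [hwz]
        unfold localNorm
        rw [show (t • (z - y)) ⬝ᵥ (H z *ᵥ (t • (z - y)))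
            = t ^ 2 * ((z - y) ⬝ᵥ (H z *ᵥ (z - y))) by
          simp [Matrix.mulVec_smul, dotProduct_smul, smul_dotProduct, smul_eq_mul]; ring]
        rw [Real.sqrt_mul (sq_nonneg t), Real.sqrt_sq htpos.le]
        have h5 := hzy
        unfold localNorm at h5
        rw [h5]
      have hlt1 : localNorm (H z) (w - z) < 1 := by
        rw [hwnorm, ht, one_div, inv_mul_eq_div]
        rw [div_lt_one (by linarith)]
        linarith
      have hwD : w ∈ D := (hsc z hz).1 w hlt1
      have keyw : g z ⬝ᵥ (w - z) ≤ ϑ :=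
        grad_bound hDc (fun a ha => (hgh a ha).2) hpos hϑ hz hwD
      rw [hwz] at keyw
      have hsm : g z ⬝ᵥ (t • (z - y)) = t * (g z ⬝ᵥ (z - y)) := by
        simp [dotProduct_smul, smul_eq_mul]
      rw [hsm] at keyw
      have hA : g z ⬝ᵥ (z - y) ≤ ϑ / t := by
        rw [le_div_iff₀ htpos]
        linarith [keyw]
      have hϑt : ϑ / t = ϑ * (r + δ) := by
        rw [ht, div_div_eq_mul_div, div_one]
      have hδε : ϑ * δ ≤ ε := by
        rw [hδ]
        rw [div_eq_mul_inv, ← mul_assoc]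
        rw [show ϑ * ε * (ϑ + 1)⁻¹ = ε * (ϑ * (ϑ + 1)⁻¹) by ring]
        have h1 : ϑ * (ϑ + 1)⁻¹ ≤ 1 := by
          rw [← div_eq_mul_inv, div_le_one (by linarith)]
          linarith
        nlinarith
      calc g z ⬝ᵥ (z - y) ≤ ϑ / t := hA
        _ = ϑ * r + ϑ * δ := by rw [hϑt]; ring
        _ ≤ ϑ * r + ε := by linarith
  intro x hx
  have key1 : g z ⬝ᵥ (x - z) ≤ ϑ :=
    grad_bound hDc (fun a ha => (hgh a ha).2) hpos hϑ hz hx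
  have hsub1 : g z ⬝ᵥ (x - z) = g z ⬝ᵥ x - g z ⬝ᵥ z := dotProduct_sub _ _ _
  have hsub2 : g z ⬝ᵥ (z - y) = g z ⬝ᵥ z - g z ⬝ᵥ y := dotProduct_sub _ _ _
  have hy' := hfoc y
  have hx' := hfoc x
  have hexp : ϑ * (1 + r) = ϑ + ϑ * r := by ring
  have hmain : η * (c ⬝ᵥ y) ≤ η * (c ⬝ᵥ x) + ϑ * (1 + r) := by
    rw [hexp]
    linarith [key1, key2, hsub1, hsub2, hy', hx']
  have h3 : c ⬝ᵥ y - c ⬝ᵥ x ≤ ϑ * (1 + r) / η := by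
    rw [le_div_iff₀ hη]
    linarith [hmain]
  have h4 : ϑ * (1 + r) / η = ϑ / η * (1 + r) := by ring
  linarith [h3, h4.le, h4.ge]
end
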